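/- Let φ be a weak Pisot substitution on the alphabet 𝒜 = {1,…,d} with d ≥ 2. Then 𝒫_φ consists of a single equivalence class under ∼; that is, any two elements of 𝒫_φ are equivalent. -/

import Mathlib

/- Statement 0: For a weak Pisot substitution φ, the set 𝒫_φ consists of a single
equivalence class under the relation generated by equality in either coordinate. -/

namespace SubstSp

variable {d : ℕ}

/-- One application of a substitution to a finite word. -/
def apply (φ : Fin d → List (Fin d)) (w : List (Fin d)) : List (Fin d) := w.flatMap φ

/-- `n`-th iterate of the substitution on finite words. -/
def iter (φ : Fin d → List (Fin d)) (n : ℕ) (w : List (Fin d)) : List (Fin d) :=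
  (apply φ)^[n] w

/-- The language of the substitution: nonempty finite words occurring as factors of some
`φⁿ(i)`. -/
def Lang (φ : Fin d → List (Fin d)) : Set (List (Fin d)) :=
  {w | w ≠ [] ∧ ∃ (i : Fin d) (n : ℕ), w <:+: iter φ n [i]}

/-- Primitivity: for all sufficiently large `n`, `φⁿ(j)` contains every letter `i`. -/
def Primitive (φ : Fin d → List (Fin d)) : Prop :=
  ∃ N : ℕ, ∀ n ≥ N, ∀ i j : Fin d, i ∈ iter φ n [j]

/-- A bi-infinite word is allowed if all of its finite factors lie in the language. -/
def Allowed (φ : Fin d → List (Fin d)) (w : ℤ → Fin d) : Prop :=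
  ∀ (m : ℤ) (k : ℕ), 0 < k → (List.ofFn fun t : Fin k => w (m + (t.1 : ℤ))) ∈ Lang φ

/-- Aperiodicity: primitive with infinitely many allowed bi-infinite words. -/
def Aperiodic (φ : Fin d → List (Fin d)) : Prop :=
  Primitive φ ∧ {w : ℤ → Fin d | Allowed φ w}.Infinite

/-- Abelianization matrix of the substitution. -/
def abel (φ : Fin d → List (Fin d)) : Matrix (Fin d) (Fin d) ℤ :=
  Matrix.of fun i j => ((φ j).count i : ℤ)

/-- `μ` is a (complex) eigenvalue of the integer matrix `M`. -/
def IsEigenvalue (M : Matrix (Fin d) (Fin d) ℤ) (μ : ℂ) : Prop :=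
  (M.map (Int.cast : ℤ → ℂ)).charpoly.IsRoot μ

/-- Weak Pisot substitution. -/
def WeakPisot (φ : Fin d → List (Fin d)) : Prop :=
  Primitive φ ∧ Aperiodic φ ∧
    ∃ lam : ℝ, 1 < lam ∧ IsEigenvalue (abel φ) (lam : ℂ) ∧
      ∀ μ : ℂ, IsEigenvalue (abel φ) μ → μ ≠ (lam : ℂ) → ‖μ‖ < 1

/-- `φ⁺`: the first letter of `φ(a)`. -/
def plusMap (φ : Fin d → List (Fin d)) (hne : ∀ a, φ a ≠ []) : Fin d → Fin d :=
  fun a => (φ a).head (hne a)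

/-- `φ⁻`: the last letter of `φ(a)`. -/
def minusMap (φ : Fin d → List (Fin d)) (hne : ∀ a, φ a ≠ []) : Fin d → Fin d :=
  fun a => (φ a).getLast (hne a)

/-- `S⁺`: the eventual range of `φ⁺`. -/
def Splus (φ : Fin d → List (Fin d)) (hne : ∀ a, φ a ≠ []) : Set (Fin d) :=
  ⋂ n : ℕ, Set.range ((plusMap φ hne)^[n])

/-- `S⁻`: the eventual range of `φ⁻`. -/
def Sminus (φ : Fin d → List (Fin d)) (hne : ∀ a, φ a ≠ []) : Set (Fin d) :=
  ⋂ n : ℕ, Set.range ((minusMap φ hne)^[n])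

/-- `𝒫_φ = {(a,b) ∈ S⁻ × S⁺ : ab ∈ 𝓛_φ}`. -/
def Pphi (φ : Fin d → List (Fin d)) (hne : ∀ a, φ a ≠ []) : Set (Fin d × Fin d) :=
  {p | p.1 ∈ Sminus φ hne ∧ p.2 ∈ Splus φ hne ∧ [p.1, p.2] ∈ Lang φ}

/-- The generating relation for `∼` on `𝒫_φ`: two elements of `𝒫_φ` are related if they
agree in the first or the second coordinate. -/
def prel (φ : Fin d → List (Fin d)) (hne : ∀ a, φ a ≠ []) :
    Fin d × Fin d → Fin d × Fin d → Prop :=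
  fun p q => p ∈ Pphi φ hne ∧ q ∈ Pphi φ hne ∧ (p.1 = q.1 ∨ p.2 = q.2)

lemma head_congr' {α : Type*} {l l' : List α} (e : l = l') (h : l ≠ []) :
    l.head h = l'.head (e ▸ h) := by subst e; rfl

section A
variable (φ : Fin d → List (Fin d)) (hne : ∀ a, φ a ≠ [])

lemma apply_append (u v : List (Fin d)) : apply φ (u ++ v) = apply φ u ++ apply φ v :=
  List.flatMap_append

lemma apply_singleton (a : Fin d) : apply φ [a] = φ a := by
  simp [apply]

lemma apply_cons (a : Fin d) (t : List (Fin d)) : apply φ (a :: t) = φ a ++ apply φ t := by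
  simpa [apply_singleton] using apply_append φ [a] t

lemma apply_ne_nil (hne : ∀ a, φ a ≠ []) {w : List (Fin d)} (hw : w ≠ []) : apply φ w ≠ [] := by
  obtain ⟨a, t, rfl⟩ := List.exists_cons_of_ne_nil hw
  rw [apply_cons]
  simp [hne a]

lemma iter_zero (w : List (Fin d)) : iter φ 0 w = w := rfl

lemma iter_succ (n : ℕ) (w : List (Fin d)) : iter φ (n+1) w = iter φ n (apply φ w) :=
  Function.iterate_succ_apply _ _ _

lemma iter_succ' (n : ℕ) (w : List (Fin d)) : iter φ (n+1) w = apply φ (iter φ n w) :=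
  Function.iterate_succ_apply' _ _ _

lemma iter_add (m n : ℕ) (w : List (Fin d)) : iter φ (m + n) w = iter φ m (iter φ n w) :=
  Function.iterate_add_apply _ _ _ _

lemma iter_ne_nil (hne : ∀ a, φ a ≠ []) {w : List (Fin d)} (hw : w ≠ []) (n : ℕ) : iter φ n w ≠ [] := by
  induction n with
  | zero => exact hw
  | succ n ih => rw [iter_succ']; exact apply_ne_nil φ hne ih

lemma iter_append (n : ℕ) (u v : List (Fin d)) :
    iter φ n (u ++ v) = iter φ n u ++ iter φ n v := by
  induction n generalizing u v with
  | zero => rfl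
  | succ n ih => rw [iter_succ, iter_succ, iter_succ, apply_append, ih]

lemma iter_singleton_mem_lang (hne : ∀ a, φ a ≠ []) (n : ℕ) (i : Fin d) : iter φ n [i] ∈ Lang φ :=
  ⟨iter_ne_nil φ hne (by simp) n, i, n, List.infix_refl _⟩

lemma lang_infix {v w : List (Fin d)} (hv : v ≠ []) (hvw : v <:+: w) (hw : w ∈ Lang φ) :
    v ∈ Lang φ := by
  obtain ⟨_, i, n, hinf⟩ := hw
  exact ⟨hv, i, n, hvw.trans hinf⟩

lemma lang_apply (hne : ∀ a, φ a ≠ []) {w : List (Fin d)} (hw : w ∈ Lang φ) : apply φ w ∈ Lang φ := by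
  obtain ⟨hwne, i, n, s, t, hst⟩ := hw
  refine ⟨apply_ne_nil φ hne hwne, i, n + 1, apply φ s, apply φ t, ?_⟩
  rw [iter_succ', ← hst, apply_append, apply_append]

lemma lang_iter (hne : ∀ a, φ a ≠ []) (m : ℕ) {w : List (Fin d)} (hw : w ∈ Lang φ) : iter φ m w ∈ Lang φ := by
  induction m with
  | zero => exact hw
  | succ n ih => rw [iter_succ']; exact lang_apply φ hne ih

lemma getLast_apply (w : List (Fin d)) (hw : w ≠ []) (h : apply φ w ≠ []) :
    (apply φ w).getLast h = minusMap φ hne (w.getLast hw) := by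
  induction w using List.reverseRecOn with
  | nil => exact absurd rfl hw
  | append_singleton u a ih =>
    have h1 : apply φ (u ++ [a]) = apply φ u ++ φ a := by
      rw [apply_append, apply_singleton]
    rw [List.getLast_congr _ ((h1 ▸ h)) h1]
    rw [List.getLast_append_of_ne_nil _ (hne a)]
    rw [List.getLast_concat]
    rfl

lemma head_apply (w : List (Fin d)) (hw : w ≠ []) (h : apply φ w ≠ []) :
    (apply φ w).head h = plusMap φ hne (w.head hw) := by
  obtain ⟨a, t, rfl⟩ := List.exists_cons_of_ne_nil hw
  rw [head_congr' (apply_cons φ a t)]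
  rw [List.head_append_of_ne_nil (hne a)]
  simp [plusMap]

lemma getLast_iter (n : ℕ) (x : Fin d) (h : iter φ n [x] ≠ []) :
    (iter φ n [x]).getLast h = (minusMap φ hne)^[n] x := by
  induction n with
  | zero => simp [iter_zero]
  | succ n ih =>
    have h2 : iter φ (n+1) [x] = apply φ (iter φ n [x]) := iter_succ' φ n [x]
    rw [List.getLast_congr _ (h2 ▸ h) h2]
    rw [getLast_apply φ hne _ (iter_ne_nil φ hne (by simp) n)]
    rw [ih (iter_ne_nil φ hne (by simp) n)]
    rw [Function.iterate_succ_apply']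

lemma head_iter (n : ℕ) (x : Fin d) (h : iter φ n [x] ≠ []) :
    (iter φ n [x]).head h = (plusMap φ hne)^[n] x := by
  induction n with
  | zero => simp [iter_zero]
  | succ n ih =>
    have h2 : iter φ (n+1) [x] = apply φ (iter φ n [x]) := iter_succ' φ n [x]
    rw [head_congr' h2]
    rw [head_apply φ hne _ (iter_ne_nil φ hne (by simp) n)]
    rw [ih (iter_ne_nil φ hne (by simp) n)]
    rw [Function.iterate_succ_apply']

end A
section B
variable {d : ℕ}

lemma idem_iterate {α : Type*} (e : α → α) (he : e ∘ e = e) :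
    ∀ j, 0 < j → e^[j] = e := by
  intro j hj
  induction j with
  | zero => omega
  | succ j ih =>
    rcases Nat.eq_zero_or_pos j with h | h
    · subst h; simp
    · rw [Function.iterate_succ', ih h, he]

lemma exists_idempotent_iterate {α : Type*} [Finite α] (f : α → α) :
    ∃ m, 0 < m ∧ f^[m] ∘ f^[m] = f^[m] := by
  obtain ⟨a, b, hab, heq⟩ := Finite.exists_ne_map_eq_of_infinite (fun n : ℕ => f^[n + 1])
  wlog hlt : a < b generalizing a b
  · exact this b a hab.symm heq.symm (by omega)
  have key : ∀ t, f^[t + (a + 1)] = f^[t + (b + 1)] := fun t => by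
    rw [Function.iterate_add f t (a + 1), Function.iterate_add f t (b + 1), heq]
  set k := b - a with hk
  have hkpos : 0 < k := by omega
  have step : ∀ n, a + 1 ≤ n → f^[n + k] = f^[n] := by
    intro n hn
    obtain ⟨t, rfl⟩ : ∃ t, n = t + (a + 1) := ⟨n - (a + 1), by omega⟩
    have h1 : t + (a + 1) + k = t + (b + 1) := by omega
    rw [h1, ← key]
  have loop : ∀ j n, a + 1 ≤ n → f^[n + j * k] = f^[n] := by
    intro j
    induction j with
    | zero => simp
    | succ j ih =>
      intro n hn
      have h2 : n + (j + 1) * k = (n + j * k) + k := by ring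
      rw [h2, step _ (by omega), ih n hn]
  refine ⟨k * (a + 1), by positivity, ?_⟩
  have h3 : a + 1 ≤ k * (a + 1) := Nat.le_mul_of_pos_left _ hkpos
  rw [← Function.iterate_add]
  have h4 : k * (a + 1) + k * (a + 1) = k * (a + 1) + (a + 1) * k := by ring
  rw [h4, loop (a + 1) _ h3]

lemma exists_common_idem (f g : Fin d → Fin d) :
    ∃ m, 0 < m ∧ f^[m] ∘ f^[m] = f^[m] ∧ g^[m] ∘ g^[m] = g^[m] := by
  obtain ⟨m₁, hm₁, hf⟩ := exists_idempotent_iterate f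
  obtain ⟨m₂, hm₂, hg⟩ := exists_idempotent_iterate g
  refine ⟨m₁ * m₂, by positivity, ?_, ?_⟩
  · rw [Function.iterate_mul, idem_iterate _ hf _ hm₂]; exact hf
  · rw [mul_comm, Function.iterate_mul, idem_iterate _ hg _ hm₁]; exact hg

variable (φ : Fin d → List (Fin d)) (hne : ∀ a, φ a ≠ [])

lemma range_iterate_mem_eventual {f : Fin d → Fin d} {m : ℕ} (hm : 0 < m)
    (hf : f^[m] ∘ f^[m] = f^[m]) (x : Fin d) (n : ℕ) :
    f^[m] x ∈ Set.range f^[n] := by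
  rcases Nat.eq_zero_or_pos n with h | h
  · subst h; simp
  · have h1 : f^[m] x = f^[m * n] x := by
      rw [Function.iterate_mul, idem_iterate _ hf n h]
    have h2 : m * n = n + (m * n - n) := by
      have := Nat.le_mul_of_pos_left n hm
      omega
    exact ⟨f^[m * n - n] x, by rw [← Function.iterate_add_apply, ← h2, ← h1]⟩

lemma Fmem_Sminus {m : ℕ} (hm : 0 < m)
    (hF : (minusMap φ hne)^[m] ∘ (minusMap φ hne)^[m] = (minusMap φ hne)^[m]) (x : Fin d) :
    (minusMap φ hne)^[m] x ∈ Sminus φ hne :=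
  Set.mem_iInter.mpr fun n => range_iterate_mem_eventual hm hF x n

lemma Gmem_Splus {m : ℕ} (hm : 0 < m)
    (hG : (plusMap φ hne)^[m] ∘ (plusMap φ hne)^[m] = (plusMap φ hne)^[m]) (x : Fin d) :
    (plusMap φ hne)^[m] x ∈ Splus φ hne :=
  Set.mem_iInter.mpr fun n => range_iterate_mem_eventual hm hG x n

lemma fix_of_mem_Sminus {m : ℕ}
    (hF : (minusMap φ hne)^[m] ∘ (minusMap φ hne)^[m] = (minusMap φ hne)^[m]) {x : Fin d}
    (hx : x ∈ Sminus φ hne) : (minusMap φ hne)^[m] x = x := by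
  have : x ∈ Set.range (minusMap φ hne)^[m] := Set.mem_iInter.mp hx m
  obtain ⟨y, rfl⟩ := this
  calc (minusMap φ hne)^[m] ((minusMap φ hne)^[m] y)
      = ((minusMap φ hne)^[m] ∘ (minusMap φ hne)^[m]) y := rfl
    _ = (minusMap φ hne)^[m] y := by rw [hF]

lemma fix_of_mem_Splus {m : ℕ}
    (hG : (plusMap φ hne)^[m] ∘ (plusMap φ hne)^[m] = (plusMap φ hne)^[m]) {x : Fin d}
    (hx : x ∈ Splus φ hne) : (plusMap φ hne)^[m] x = x := by
  have : x ∈ Set.range (plusMap φ hne)^[m] := Set.mem_iInter.mp hx m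
  obtain ⟨y, rfl⟩ := this
  calc (plusMap φ hne)^[m] ((plusMap φ hne)^[m] y)
      = ((plusMap φ hne)^[m] ∘ (plusMap φ hne)^[m]) y := rfl
    _ = (plusMap φ hne)^[m] y := by rw [hG]

lemma infix_last_head {α : Type*} (u v : List α) (hu : u ≠ []) (hv : v ≠ []) :
    [u.getLast hu, v.head hv] <:+: u ++ v := by
  refine ⟨u.dropLast, v.tail, ?_⟩
  conv_rhs => rw [← List.dropLast_append_getLast hu, ← List.cons_head_tail hv]
  simp

lemma Tpair_mem {m : ℕ} (hm : 0 < m)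
    (hF : (minusMap φ hne)^[m] ∘ (minusMap φ hne)^[m] = (minusMap φ hne)^[m])
    (hG : (plusMap φ hne)^[m] ∘ (plusMap φ hne)^[m] = (plusMap φ hne)^[m])
    {x y : Fin d} (hxy : [x, y] ∈ Lang φ) :
    ((minusMap φ hne)^[m] x, (plusMap φ hne)^[m] y) ∈ Pphi φ hne := by
  refine ⟨Fmem_Sminus φ hne hm hF x, Gmem_Splus φ hne hm hG y, ?_⟩
  have hiter : iter φ m [x, y] ∈ Lang φ := lang_iter φ hne m hxy
  have hsplit : iter φ m [x, y] = iter φ m [x] ++ iter φ m [y] := by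
    have : ([x, y] : List (Fin d)) = [x] ++ [y] := rfl
    rw [this, iter_append]
  have hu : iter φ m [x] ≠ [] := iter_ne_nil φ hne (by simp) m
  have hv : iter φ m [y] ≠ [] := iter_ne_nil φ hne (by simp) m
  have hinf := infix_last_head (iter φ m [x]) (iter φ m [y]) hu hv
  rw [getLast_iter φ hne m x hu, head_iter φ hne m y hv] at hinf
  refine lang_infix φ (by simp) ?_ hiter
  rw [hsplit]; exact hinf

end B

open Polynomial Filter in
section
noncomputable section

/-- The shift operator on complex sequences. -/
def shift : Module.End ℂ (ℕ → ℂ) where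
  toFun c := fun n => c (n + 1)
  map_add' := by intros; rfl
  map_smul' := by intros; rfl

lemma shift_pow_apply (i : ℕ) (c : ℕ → ℂ) (n : ℕ) : ((shift ^ i) c) n = c (n + i) := by
  induction i generalizing c n with
  | zero => rfl
  | succ i ih =>
    rw [pow_succ]
    have h : ((shift ^ i * shift) c) = (shift ^ i) (shift c) := rfl
    rw [h, ih]
    rfl

lemma aeval_shift_apply (P : ℂ[X]) (c : ℕ → ℂ) (n : ℕ) :
    ((aeval shift P) c) n = ∑ i ∈ Finset.range (P.natDegree + 1), P.coeff i * c (n + i) := by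
  rw [aeval_eq_sum_range, LinearMap.sum_apply, Finset.sum_apply]
  refine Finset.sum_congr rfl fun i _ => ?_
  rw [LinearMap.smul_apply]
  show P.coeff i * ((shift ^ i) c) n = _
  rw [shift_pow_apply]

/-- Perturbed contraction tends to zero. -/
lemma pert {μ : ℂ} (hμ : ‖μ‖ < 1) (u : ℕ → ℂ)
    (h : Tendsto (fun n => u (n + 1) - μ * u n) atTop (nhds 0)) :
    Tendsto u atTop (nhds 0) := by
  set r := ‖μ‖ with hr
  have hr0 : 0 ≤ r := norm_nonneg μ
  have h1r : 0 < 1 - r := by linarith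
  rw [Metric.tendsto_atTop] at h ⊢
  intro ε hε
  have hδ : 0 < ε * (1 - r) / 2 := by
    have := mul_pos hε h1r; linarith
  obtain ⟨N₁, hN₁⟩ := h _ hδ
  set δ := ε * (1 - r) / 2 with hδdef
  set M := ‖u N₁‖ with hM
  have hM0 : 0 ≤ M := norm_nonneg _
  have hhalf : δ / (1 - r) = ε / 2 := by
    field_simp [hδdef]
    ring
  have key : ∀ k, ‖u (N₁ + k)‖ ≤ r ^ k * M + δ / (1 - r) := by
    intro k
    induction k with
    | zero =>
      simp only [Nat.add_zero, pow_zero, one_mul]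
      have : 0 ≤ δ / (1 - r) := div_nonneg hδ.le h1r.le
      linarith [le_refl M]
    | succ k ih =>
      have h2 := hN₁ (N₁ + k) (by omega)
      rw [dist_zero_right] at h2
      have h1 : ‖u (N₁ + k + 1)‖ ≤ r * ‖u (N₁ + k)‖ + δ := by
        calc ‖u (N₁ + k + 1)‖ = ‖μ * u (N₁ + k) + (u (N₁ + k + 1) - μ * u (N₁ + k))‖ := by
              ring_nf
          _ ≤ ‖μ * u (N₁ + k)‖ + ‖u (N₁ + k + 1) - μ * u (N₁ + k)‖ := norm_add_le _ _
          _ ≤ r * ‖u (N₁ + k)‖ + δ := by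
              rw [norm_mul]; exact add_le_add le_rfl h2.le
      have h3 : N₁ + (k + 1) = N₁ + k + 1 := by omega
      rw [h3]
      calc ‖u (N₁ + k + 1)‖ ≤ r * ‖u (N₁ + k)‖ + δ := h1
        _ ≤ r * (r ^ k * M + δ / (1 - r)) + δ := by
            exact add_le_add (mul_le_mul_of_nonneg_left ih hr0) le_rfl
        _ = r ^ (k + 1) * M + δ / (1 - r) := by
            have hne : (1 : ℝ) - r ≠ 0 := by linarith
            field_simp
            ring
  have hpow : Tendsto (fun k : ℕ => r ^ k * M) atTop (nhds 0) := by
    simpa using (tendsto_pow_atTop_nhds_zero_of_lt_one hr0 hμ).mul_const M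
  rw [Metric.tendsto_atTop] at hpow
  obtain ⟨K, hK⟩ := hpow (ε / 2) (by linarith)
  refine ⟨N₁ + K, fun n hn => ?_⟩
  have hk : ∃ k, k ≥ K ∧ n = N₁ + k := ⟨n - N₁, by omega, by omega⟩
  obtain ⟨k, hkK, rfl⟩ := hk
  have h4 := key k
  have h5 := hK k hkK
  rw [Real.dist_eq, sub_zero] at h5
  rw [dist_zero_right]
  have h6 : r ^ k * M ≤ |r ^ k * M| := le_abs_self _
  have h7 : |r ^ k * M| < ε / 2 := h5
  calc ‖u (N₁ + k)‖ ≤ r ^ k * M + δ / (1 - r) := h4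
    _ = r ^ k * M + ε / 2 := by rw [hhalf]
    _ < ε / 2 + ε / 2 := by linarith
    _ = ε := by ring



lemma sub_linear_apply (μ : ℂ) (v : ℕ → ℂ) :
    (aeval shift (X - C μ)) v = fun n => v (n + 1) - μ * v n := by
  rw [map_sub, aeval_X, aeval_C]
  funext n
  rw [LinearMap.sub_apply]
  show (shift v) n - ((algebraMap ℂ (Module.End ℂ (ℕ → ℂ)) μ) v) n = _
  rw [Module.algebraMap_end_apply]
  rfl

lemma tend_zero_of_aeval : ∀ (k : ℕ) (q : ℂ[X]), q.natDegree ≤ k → q ≠ 0 →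
    (∀ μ, q.IsRoot μ → ‖μ‖ < 1) → ∀ c : ℕ → ℂ,
    Tendsto ((aeval shift q) c) atTop (nhds 0) → Tendsto c atTop (nhds 0) := by
  intro k
  induction k with
  | zero =>
    intro q hdeg hq0 _ c h
    obtain ⟨a, rfl⟩ := natDegree_eq_zero.mp (Nat.le_zero.mp hdeg)
    have ha : a ≠ 0 := fun h' => hq0 (by rw [h', map_zero])
    have h1 : (aeval shift (C a)) c = a • c := by
      rw [aeval_C]; rfl
    rw [h1] at h
    have h2 := h.const_smul a⁻¹
    simpa [inv_mul_cancel_left₀ ha] using h2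
  | succ k ih =>
    intro q hdeg hq0 hroots c h
    rcases Nat.eq_zero_or_pos q.natDegree with hd0 | hdpos
    · obtain ⟨a, rfl⟩ := natDegree_eq_zero.mp hd0
      have ha : a ≠ 0 := fun h' => hq0 (by rw [h', map_zero])
      have h1 : (aeval shift (C a)) c = a • c := by
        rw [aeval_C]; rfl
      rw [h1] at h
      have h2 := h.const_smul a⁻¹
      simpa [inv_mul_cancel_left₀ ha] using h2
    · obtain ⟨μ, hμroot⟩ := Complex.exists_root (natDegree_pos_iff_degree_pos.mp hdpos)
      have hμ1 : ‖μ‖ < 1 := hroots μ hμroot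
      obtain ⟨q₁, hfac⟩ := dvd_iff_isRoot.mpr hμroot
      have hq₁0 : q₁ ≠ 0 := fun h' => hq0 (by rw [hfac, h', mul_zero])
      have hdeg1 : q.natDegree = 1 + q₁.natDegree := by
        rw [hfac, natDegree_mul (X_sub_C_ne_zero μ) hq₁0, natDegree_X_sub_C]
      have hroots1 : ∀ μ', q₁.IsRoot μ' → ‖μ'‖ < 1 := by
        intro μ' hr
        refine hroots μ' ?_
        rw [IsRoot, hfac, eval_mul, hr.eq_zero, mul_zero]
      have hsplit : (aeval shift q) c = (aeval shift (X - C μ)) ((aeval shift q₁) c) := by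
        rw [hfac, map_mul]
        rfl
      rw [hsplit, sub_linear_apply] at h
      have hu := pert hμ1 ((aeval shift q₁) c) h
      exact ih q₁ (by omega) hq₁0 hroots1 c hu

lemma zero_of_contraction {lam : ℂ} (hlam : 1 < ‖lam‖) :
    ∀ (m : ℕ) (u : ℕ → ℂ), (((aeval shift (X - C lam))) ^ m) u = 0 →
    (∃ B, ∀ n, ‖u n‖ ≤ B) → u = 0 := by
  intro m
  induction m with
  | zero =>
    intro u h _
    simpa using h
  | succ m ih =>
    intro u h hB
    obtain ⟨B, hBle⟩ := hB
    set T := aeval shift (X - C lam) with hT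
    have h1 : (T ^ (m + 1)) u = (T ^ m) (T u) := by
      rw [pow_succ]; rfl
    rw [h1] at h
    have hTu : T u = 0 := by
      refine ih (T u) h ⟨B + ‖lam‖ * B, fun n => ?_⟩
      rw [hT, sub_linear_apply]
      calc ‖u (n + 1) - lam * u n‖ ≤ ‖u (n + 1)‖ + ‖lam * u n‖ := norm_sub_le _ _
        _ ≤ B + ‖lam‖ * B := by
            rw [norm_mul]
            exact add_le_add (hBle _) (mul_le_mul_of_nonneg_left (hBle _) (norm_nonneg _))
    have hrec : ∀ n, u (n + 1) = lam * u n := by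
      intro n
      have := congrFun (hT ▸ hTu) n
      rw [sub_linear_apply] at this
      simpa [sub_eq_zero] using this
    have hgeom : ∀ n, u n = lam ^ n * u 0 := by
      intro n
      induction n with
      | zero => simp
      | succ n ihn => rw [hrec n, ihn]; ring
    have hu0 : u 0 = 0 := by
      by_contra h0
      obtain ⟨n, hn⟩ := pow_unbounded_of_one_lt (B / ‖u 0‖) hlam
      have h2 := hBle n
      rw [hgeom n, norm_mul, norm_pow] at h2
      have h3 : 0 < ‖u 0‖ := norm_pos_iff.mpr h0
      have h4 : B / ‖u 0‖ < ‖lam‖ ^ n := hn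
      have h5 : B < ‖lam‖ ^ n * ‖u 0‖ := by
        rw [div_lt_iff₀ h3] at h4; linarith
      linarith
    funext n
    rw [hgeom n, hu0, mul_zero]
    rfl

lemma eventually_zero_of_bounded (χ : Polynomial ℤ) (hmon : χ.Monic)
    (lam : ℝ) (hlam : 1 < lam)
    (hroots : ∀ μ : ℂ, (χ.map (Int.castRingHom ℂ)).IsRoot μ → μ ≠ (lam : ℂ) →
      ‖μ‖ < 1)
    (σ : ℕ → ℤ) (hb : ∀ n, |σ n| ≤ 1)
    (hrec : ∀ n, ∑ i ∈ Finset.range (χ.natDegree + 1), χ.coeff i * σ (n + i) = 0) :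
    ∃ N, ∀ n, N ≤ n → σ n = 0 := by
  classical
  set c : ℕ → ℂ := fun n => ((σ n : ℤ) : ℂ) with hc
  set χℂ := χ.map (Int.castRingHom ℂ) with hχℂ
  have hmono : χℂ.Monic := hmon.map _
  have hχ0 : χℂ ≠ 0 := hmono.ne_zero
  have hcnorm : ∀ n, ‖c n‖ ≤ 1 := by
    intro n
    rw [hc]
    rw [Complex.norm_intCast]
    exact_mod_cast hb n
  have h0 : (aeval shift χℂ) c = 0 := by
    funext n
    rw [aeval_shift_apply]
    have hdeg : χℂ.natDegree = χ.natDegree := hmon.natDegree_map _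
    rw [hdeg]
    have : ∀ i, χℂ.coeff i = ((χ.coeff i : ℤ) : ℂ) := fun i => by
      rw [hχℂ, coeff_map]; rfl
    calc ∑ i ∈ Finset.range (χ.natDegree + 1), χℂ.coeff i * c (n + i)
        = ∑ i ∈ Finset.range (χ.natDegree + 1), ((χ.coeff i * σ (n + i) : ℤ) : ℂ) := by
          refine Finset.sum_congr rfl fun i _ => ?_
          rw [this i, hc]
          push_cast
          ring
      _ = ((∑ i ∈ Finset.range (χ.natDegree + 1), χ.coeff i * σ (n + i) : ℤ) : ℂ) := by
          push_cast
          ring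
      _ = 0 := by rw [hrec n]; exact Int.cast_zero
  set m := rootMultiplicity ((lam : ℝ) : ℂ) χℂ with hm
  obtain ⟨q, hfac⟩ := pow_rootMultiplicity_dvd χℂ ((lam : ℝ) : ℂ)
  have hq0 : q ≠ 0 := fun h' => hχ0 (by rw [hfac, h', mul_zero])
  have hqlam : ¬ q.IsRoot ((lam : ℝ) : ℂ) := by
    intro hr
    obtain ⟨q₂, hq₂⟩ := dvd_iff_isRoot.mpr hr
    refine pow_rootMultiplicity_not_dvd hχ0 ((lam : ℝ) : ℂ) ?_
    refine ⟨q₂, ?_⟩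
    conv_lhs => rw [hfac, hq₂]
    rw [pow_succ, ← hm]
    ring
  have hqroots : ∀ μ, q.IsRoot μ → ‖μ‖ < 1 := by
    intro μ hr
    have hχroot : χℂ.IsRoot μ := by
      rw [IsRoot, hfac, eval_mul, hr.eq_zero, mul_zero]
    by_cases hμlam : μ = ((lam : ℝ) : ℂ)
    · exact absurd (hμlam ▸ hr) hqlam
    · have h9 := hroots μ hχroot hμlam
      exact h9
  have hlamnorm : 1 < ‖((lam : ℝ) : ℂ)‖ := by
    rw [Complex.norm_real, Real.norm_eq_abs, abs_of_pos (by linarith)]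
    exact hlam
  set dseq := (aeval shift q) c with hdseq
  have hTm : ((aeval shift (X - C ((lam : ℝ) : ℂ))) ^ m) dseq = 0 := by
    have : (aeval shift χℂ) c =
        ((aeval shift (X - C ((lam : ℝ) : ℂ))) ^ m) ((aeval shift q) c) := by
      rw [hfac, map_mul, map_pow]
      rfl
    rw [← this, h0]
  have hdbound : ∃ B, ∀ n, ‖dseq n‖ ≤ B := by
    refine ⟨∑ i ∈ Finset.range (q.natDegree + 1), ‖q.coeff i‖, fun n => ?_⟩
    rw [hdseq, aeval_shift_apply]
    calc ‖∑ i ∈ Finset.range (q.natDegree + 1), q.coeff i * c (n + i)‖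
        ≤ ∑ i ∈ Finset.range (q.natDegree + 1), ‖q.coeff i * c (n + i)‖ :=
          norm_sum_le _ _
      _ ≤ ∑ i ∈ Finset.range (q.natDegree + 1), ‖q.coeff i‖ := by
          refine Finset.sum_le_sum fun i _ => ?_
          rw [norm_mul]
          calc ‖q.coeff i‖ * ‖c (n + i)‖ ≤ ‖q.coeff i‖ * 1 :=
                mul_le_mul_of_nonneg_left (hcnorm _) (norm_nonneg _)
            _ = ‖q.coeff i‖ := mul_one _
  have hdzero : dseq = 0 := zero_of_contraction hlamnorm m dseq hTm hdbound
  have hctend : Tendsto c atTop (nhds 0) := by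
    refine tend_zero_of_aeval q.natDegree q le_rfl hq0 hqroots c ?_
    rw [← hdseq, hdzero]
    exact tendsto_const_nhds
  rw [Metric.tendsto_atTop] at hctend
  obtain ⟨N, hN⟩ := hctend (1 / 2) (by norm_num)
  refine ⟨N, fun n hn => ?_⟩
  have h1 := hN n hn
  rw [dist_zero_right] at h1
  have h2 : ‖c n‖ = ((|σ n| : ℤ) : ℝ) := by
    rw [hc, Complex.norm_intCast]
    push_cast
    ring
  rw [h2] at h1
  have h3 : ((|σ n| : ℤ) : ℝ) < 1 := by linarith
  have h4 : |σ n| < 1 := by exact_mod_cast h3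
  exact Int.abs_lt_one_iff.mp h4


end
end


section Counting
variable {d : ℕ} (φ : Fin d → List (Fin d)) (hne : ∀ a, φ a ≠ [])

lemma map_sum_eq_count (l : List (Fin d)) (u : Fin d → ℤ) :
    (l.map u).sum = ∑ i : Fin d, (l.count i : ℤ) * u i := by
  classical
  rw [Finset.sum_list_map_count]
  rw [Finset.sum_subset (Finset.subset_univ l.toFinset)]
  · refine Finset.sum_congr rfl fun i _ => ?_
    rw [nsmul_eq_mul]
  · intro x _ hx
    rw [List.count_eq_zero.mpr (fun h => hx (List.mem_toFinset.mpr h))]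
    simp

lemma vecMul_abel_apply (z : Fin d → ℤ) (j : Fin d) :
    Matrix.vecMul z (abel φ) j = ((φ j).map z).sum := by
  rw [map_sum_eq_count]
  simp only [Matrix.vecMul, dotProduct, abel, Matrix.of_apply]
  refine Finset.sum_congr rfl fun i _ => ?_
  ring

lemma iter_nil (n : ℕ) : iter φ n ([] : List (Fin d)) = [] := by
  induction n with
  | zero => rfl
  | succ n ih => rw [iter_succ', ih]; rfl

lemma mapsum_iter (u : Fin d → ℤ) (n : ℕ) (l : List (Fin d)) :
    ((iter φ n l).map u).sum = (l.map (fun a => ((iter φ n [a]).map u).sum)).sum := by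
  induction l with
  | nil => rw [iter_nil]; rfl
  | cons a t ih =>
    have h1 : a :: t = [a] ++ t := rfl
    rw [h1, iter_append, List.map_append, List.sum_append, ih]
    simp

lemma vecMul_pow_eq (z : Fin d → ℤ) (n : ℕ) :
    Matrix.vecMul z ((abel φ) ^ n) = fun x => ((iter φ n [x]).map z).sum := by
  induction n with
  | zero =>
    funext x
    rw [pow_zero, Matrix.vecMul_one]
    simp [iter_zero]
  | succ n ih =>
    funext x
    rw [pow_succ, ← Matrix.vecMul_vecMul, ih, vecMul_abel_apply]
    have h1 : iter φ (n + 1) [x] = iter φ n (φ x) := by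
      rw [iter_succ, apply_singleton]
    rw [h1, mapsum_iter]

lemma vecMul_matrix_smul (z : Fin d → ℤ) (c : ℤ) (M : Matrix (Fin d) (Fin d) ℤ) :
    Matrix.vecMul z (c • M) = c • Matrix.vecMul z M := by
  funext j
  simp [Matrix.vecMul, dotProduct, Finset.mul_sum, mul_left_comm]

lemma vecMul_finset_sum (z : Fin d → ℤ) {ι : Type*} (s : Finset ι)
    (f : ι → Matrix (Fin d) (Fin d) ℤ) :
    Matrix.vecMul z (∑ i ∈ s, f i) = ∑ i ∈ s, Matrix.vecMul z (f i) := by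
  classical
  induction s using Finset.induction_on with
  | empty => simp [Matrix.vecMul_zero]
  | insert _ _ hnotmem ih =>
    rw [Finset.sum_insert hnotmem, Finset.sum_insert hnotmem, Matrix.vecMul_add, ih]

open Polynomial in
lemma charpoly_rec (z : Fin d → ℤ) (x : Fin d) (n : ℕ) :
    ∑ i ∈ Finset.range ((abel φ).charpoly.natDegree + 1),
      (abel φ).charpoly.coeff i * (Matrix.vecMul z ((abel φ) ^ (n + i)) x) = 0 := by
  classical
  set A := abel φ with hA
  set χ := A.charpoly with hχ
  have key : ∑ i ∈ Finset.range (χ.natDegree + 1), χ.coeff i • (A ^ (n + i))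
      = A ^ n * ∑ i ∈ Finset.range (χ.natDegree + 1), χ.coeff i • (A ^ i) := by
    rw [Finset.mul_sum]
    refine Finset.sum_congr rfl fun i _ => ?_
    rw [pow_add, Matrix.mul_smul]
  have hCH : ∑ i ∈ Finset.range (χ.natDegree + 1), χ.coeff i • (A ^ i) = 0 := by
    rw [← aeval_eq_sum_range (p := χ) A, hχ, Matrix.aeval_self_charpoly]
  have h2 : ∑ i ∈ Finset.range (χ.natDegree + 1), χ.coeff i • (A ^ (n + i)) = 0 := by
    rw [key, hCH, mul_zero]
  have h3 := congrArg (fun M => Matrix.vecMul z M x) h2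
  simp only [Matrix.vecMul_zero, Pi.zero_apply] at h3
  rw [vecMul_finset_sum, Finset.sum_apply] at h3
  rw [← h3]
  refine Finset.sum_congr rfl fun i _ => ?_
  rw [vecMul_matrix_smul]
  simp [smul_eq_mul]

end Counting

/-- If `φ` is weak Pisot (with `d ≥ 2`), then `𝒫_φ` consists of a single
equivalence class: any two of its elements are equivalent under the equivalence relation
generated by agreement in either coordinate. -/
theorem Pphi_single_class (d : ℕ) (hd : 2 ≤ d) (φ : Fin d → List (Fin d))
    (hne : ∀ a, φ a ≠ []) (hWP : WeakPisot φ) :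
    ∀ p q : Fin d × Fin d, p ∈ Pphi φ hne → q ∈ Pphi φ hne →
      Relation.EqvGen (prel φ hne) p q := by
  classical
  intro p q hp hq
  obtain ⟨hPrim, _, lam, hlam1, _, hsmall⟩ := hWP
  obtain ⟨N, hN⟩ := hPrim
  obtain ⟨m, hm, hF, hG⟩ := exists_common_idem (minusMap φ hne) (plusMap φ hne)
  set F := (minusMap φ hne)^[m] with hFdef
  set G := (plusMap φ hne)^[m] with hGdef
  set cm : Fin d → Prop := fun x => ∃ b, (F x, b) ∈ Pphi φ hne ∧
    Relation.EqvGen (prel φ hne) p (F x, b) with hcmdef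
  set cp : Fin d → Prop := fun y => ∃ a, (a, G y) ∈ Pphi φ hne ∧
    Relation.EqvGen (prel φ hne) p (a, G y) with hcpdef
  have hbridge : ∀ x y : Fin d, [x, y] ∈ Lang φ → (cm x ↔ cp y) := by
    intro x y hxy
    have ht := Tpair_mem φ hne hm hF hG hxy
    simp only [hcmdef, hcpdef]
    constructor
    · rintro ⟨b, hmem, hR⟩
      exact ⟨F x, ht, Relation.EqvGen.trans _ _ _ hR
        (Relation.EqvGen.rel _ _ ⟨hmem, ht, Or.inl rfl⟩)⟩
    · rintro ⟨a, hmem, hR⟩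
      exact ⟨G y, ht, Relation.EqvGen.trans _ _ _ hR
        (Relation.EqvGen.rel _ _ ⟨hmem, ht, Or.inr rfl⟩)⟩
  set z : Fin d → ℤ := fun x => (if cm x then (1:ℤ) else 0) - (if cp x then (1:ℤ) else 0)
    with hzdef
  have hsum : ∀ w : List (Fin d), w ∈ Lang φ → ∀ (hw : w ≠ []),
      (w.map z).sum = (if cm (w.getLast hw) then (1:ℤ) else 0)
        - (if cp (w.head hw) then (1:ℤ) else 0) := by
    intro w
    induction w with
    | nil => intro _ hw; exact absurd rfl hw
    | cons a t ih =>
      intro hwL hw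
      cases t with
      | nil =>
        simp [hzdef]
        by_cases h1 : cm a <;> by_cases h2 : cp a <;> simp [h1, h2]
      | cons b t' =>
        have htL : (b :: t') ∈ Lang φ :=
          lang_infix φ (by simp) ⟨[a], [], by simp⟩ hwL
        have hab : [a, b] ∈ Lang φ :=
          lang_infix φ (by simp) ⟨[], t', by simp⟩ hwL
        have hiff := hbridge a b hab
        have ihh := ih htL (by simp)
        have hgl : (a :: b :: t').getLast hw = (b :: t').getLast (by simp) :=
          List.getLast_cons _
        rw [List.map_cons, List.sum_cons, ihh, hgl]
        simp only [List.head_cons]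
        have heq1 : (if cm a then (1:ℤ) else 0) = (if cp b then (1:ℤ) else 0) := by
          by_cases h1 : cm a
          · rw [if_pos h1, if_pos (hiff.mp h1)]
          · rw [if_neg h1, if_neg (fun h2 => h1 (hiff.mpr h2))]
        have hza : z a = (if cm a then (1:ℤ) else 0) - (if cp a then (1:ℤ) else 0) := by
          rw [hzdef]
        rw [hza, heq1]
        by_cases h1 : cp b <;> by_cases h2 : cp a <;>
          by_cases h3 : cm ((b :: t').getLast (by simp)) <;> simp [h1, h2, h3]
  have hLINK : ∀ x : Fin d, cm x ↔ cp x := by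
    intro x
    have hmono := Matrix.charpoly_monic (abel φ)
    have hroots : ∀ μ : ℂ, ((abel φ).charpoly.map (Int.castRingHom ℂ)).IsRoot μ →
        μ ≠ (lam : ℂ) → ‖μ‖ < 1 := by
      intro μ hr hμ
      refine hsmall μ ?_ hμ
      show ((abel φ).map (Int.cast : ℤ → ℂ)).charpoly.IsRoot μ
      have hmap : ((abel φ).map (Int.cast : ℤ → ℂ)).charpoly
          = (abel φ).charpoly.map (Int.castRingHom ℂ) :=
        Matrix.charpoly_map (abel φ) (Int.castRingHom ℂ)
      rw [hmap]; exact hr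
    have hσb : ∀ n, |Matrix.vecMul z ((abel φ) ^ n) x| ≤ 1 := by
      intro n
      have hZ := congrFun (vecMul_pow_eq φ z n) x
      have hlang := iter_singleton_mem_lang φ hne n x
      have hnn : iter φ n [x] ≠ [] := iter_ne_nil φ hne (by simp) n
      rw [hZ, hsum _ hlang hnn]
      split_ifs <;> simp
    obtain ⟨N₀, hN₀⟩ := eventually_zero_of_bounded (abel φ).charpoly hmono lam hlam1 hroots
      (fun n => Matrix.vecMul z ((abel φ) ^ n) x) hσb (fun n => charpoly_rec φ z x n)
    have hmk : N₀ ≤ m * (N₀ + 1) := by nlinarith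
    have hz0 := hN₀ (m * (N₀ + 1)) hmk
    have hZ := congrFun (vecMul_pow_eq φ z (m * (N₀ + 1))) x
    have hlang := iter_singleton_mem_lang φ hne (m * (N₀ + 1)) x
    have hnn : iter φ (m * (N₀ + 1)) [x] ≠ [] := iter_ne_nil φ hne (by simp) _
    rw [hZ, hsum _ hlang hnn] at hz0
    rw [getLast_iter φ hne _ x hnn, head_iter φ hne _ x hnn] at hz0
    have hFx : (minusMap φ hne)^[m * (N₀ + 1)] x = F x := by
      rw [Function.iterate_mul, idem_iterate _ hF _ (by omega)]
    have hGx : (plusMap φ hne)^[m * (N₀ + 1)] x = G x := by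
      rw [Function.iterate_mul, idem_iterate _ hG _ (by omega)]
    rw [hFx, hGx] at hz0
    have hFF : F (F x) = F x := congrFun hF x
    have hGG : G (G x) = G x := congrFun hG x
    have hcmF : cm (F x) ↔ cm x := by
      simp only [hcmdef, hFF]
    have hcpG : cp (G x) ↔ cp x := by
      simp only [hcpdef, hGG]
    have hfinal : cm (F x) ↔ cp (G x) := by
      by_cases h1 : cm (F x) <;> by_cases h2 : cp (G x)
      · exact iff_of_true h1 h2
      · rw [if_pos h1, if_neg h2] at hz0; norm_num at hz0
      · rw [if_neg h1, if_pos h2] at hz0; norm_num at hz0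
      · exact iff_of_false h1 h2
    exact (hcmF.symm.trans hfinal).trans hcpG
  have hprop : ∀ w : List (Fin d), w ∈ Lang φ → ∀ (hw : w ≠ []), ∀ x, x ∈ w →
      (cm x ↔ cm (w.head hw)) := by
    intro w
    induction w with
    | nil => intro _ hw; exact absurd rfl hw
    | cons a t ih =>
      intro hwL hw x hx
      rcases List.mem_cons.mp hx with rfl | hxt
      · simp
      · have htne : t ≠ [] := List.ne_nil_of_mem hxt
        obtain ⟨b, t', rfl⟩ := List.exists_cons_of_ne_nil htne
        have htL : (b :: t') ∈ Lang φ := lang_infix φ (by simp) ⟨[a], [], by simp⟩ hwL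
        have hab : [a, b] ∈ Lang φ := lang_infix φ (by simp) ⟨[], t', by simp⟩ hwL
        have ih2 := ih htL (by simp) x hxt
        have h1 : cm a ↔ cm b := (hbridge a b hab).trans (hLINK b).symm
        simp only [List.head_cons] at ih2 ⊢
        exact ih2.trans h1.symm
  have hp1 : F p.1 = p.1 := fix_of_mem_Sminus φ hne hF hp.1
  have hq1 : F q.1 = q.1 := fix_of_mem_Sminus φ hne hF hq.1
  have hcmp : cm p.1 := by
    simp only [hcmdef]
    refine ⟨p.2, ?_, ?_⟩
    · rw [hp1, Prod.mk.eta]; exact hp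
    · rw [hp1, Prod.mk.eta]; exact Relation.EqvGen.refl p
  obtain ⟨j⟩ : Nonempty (Fin d) := ⟨⟨0, by omega⟩⟩
  have hwL := iter_singleton_mem_lang φ hne N j
  have hwne : iter φ N [j] ≠ [] := iter_ne_nil φ hne (by simp) N
  have hmem1 : p.1 ∈ iter φ N [j] := hN N le_rfl p.1 j
  have hmem2 : q.1 ∈ iter φ N [j] := hN N le_rfl q.1 j
  have e1 := hprop _ hwL hwne p.1 hmem1
  have e2 := hprop _ hwL hwne q.1 hmem2
  have hcmq : cm q.1 := e2.mpr (e1.mp hcmp)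
  simp only [hcmdef] at hcmq
  obtain ⟨b, hmemb, hRb⟩ := hcmq
  rw [hq1] at hmemb hRb
  exact Relation.EqvGen.trans _ _ _ hRb (Relation.EqvGen.rel _ _ ⟨hmemb, hq, Or.inl rfl⟩)

end SubstSp
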